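/- Let aff(F) be the 2-dimensional algebra over a field F with basis B = {x,y} and [x,y] = y. Let σ, η be linear endomorphisms with matrices (σ_ij), (η_ij) in the basis B (so σ(x) = σ11·x + σ21·y and σ(y) = σ12·x + σ22·y, similarly for η), and assume σ12 ≠ 0 and η12 ≠ 0 (so that the twisted triples are simple Hom-Lie algebras). Then there exists a bijective linear map φ : aff(F) → aff(F) with φ([u,v]) = [φ(u),φ(v)] for all u,v and φ∘σ = η∘φ (equivalently, the simple Hom-Lie algebras (aff(F), σ∘[·,·], σ) and (aff(F), η∘[·,·], η) are isomorphic) if and only if σ11 + σ22 = η11 + η22 and σ12·σ21 − η12·η21 = (σ11 − η11)·(σ22 − η11). In particular, there are at least as many pairwise nonisomorphic simple Hom-Lie structures on aff(F) as elements of F. -/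

import Mathlib

section aux
variable {F : Type*} [Field F] {A : Type*} [AddCommGroup A] [Module F A]

lemma aux_toMatrix (B : Module.Basis (Fin 2) F A) (f : A →ₗ[F] A) (a c e d : F)
    (h0 : f (B 0) = a • B 0 + c • B 1) (h1 : f (B 1) = e • B 0 + d • B 1) :
    LinearMap.toMatrix B B f = !![a, e; c, d] := by
  ext i j
  rw [LinearMap.toMatrix_apply]
  fin_cases j <;> fin_cases i <;> simp [h0, h1, Finsupp.single_apply]

lemma aux_trace (B : Module.Basis (Fin 2) F A) (f : A →ₗ[F] A) (a c e d : F)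
    (h0 : f (B 0) = a • B 0 + c • B 1) (h1 : f (B 1) = e • B 0 + d • B 1) :
    LinearMap.trace F A f = a + d := by
  rw [LinearMap.trace_eq_matrix_trace F B f, aux_toMatrix B f a c e d h0 h1,
    Matrix.trace_fin_two_of]

lemma aux_det (B : Module.Basis (Fin 2) F A) (f : A →ₗ[F] A) (a c e d : F)
    (h0 : f (B 0) = a • B 0 + c • B 1) (h1 : f (B 1) = e • B 0 + d • B 1) :
    LinearMap.det f = a * d - e * c := by
  rw [← LinearMap.det_toMatrix B f, aux_toMatrix B f a c e d h0 h1,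
    Matrix.det_fin_two_of]

lemma aux_conj (φ : A ≃ₗ[F] A) (σ η : A →ₗ[F] A) (h : ∀ u, φ (σ u) = η (φ u)) :
    η = φ.conj σ := by
  ext u
  rw [LinearEquiv.conj_apply]
  simp only [LinearMap.comp_apply, LinearEquiv.coe_coe]
  rw [h, LinearEquiv.apply_symm_apply]

lemma aux_trace_det (φ : A ≃ₗ[F] A) (σ η : A →ₗ[F] A) (h : ∀ u, φ (σ u) = η (φ u)) :
    LinearMap.trace F A η = LinearMap.trace F A σ ∧ LinearMap.det η = LinearMap.det σ := by
  rw [aux_conj φ σ η h]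
  exact ⟨LinearMap.trace_conj' σ φ, by rw [LinearEquiv.conj_apply]; exact LinearMap.det_conj σ φ⟩

end aux

theorem stmt4 (F : Type*) [Field F] (A : Type*) [AddCommGroup A] [Module F A]
    (B : Module.Basis (Fin 2) F A)
    (b : A →ₗ[F] A →ₗ[F] A)
    (halt : ∀ x : A, b x x = 0)
    (haff : b (B 0) (B 1) = B 1)
    (σ η : A →ₗ[F] A)
    (σ11 σ12 σ21 σ22 η11 η12 η21 η22 : F)
    (hσx : σ (B 0) = σ11 • B 0 + σ21 • B 1) (hσy : σ (B 1) = σ12 • B 0 + σ22 • B 1)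
    (hηx : η (B 0) = η11 • B 0 + η21 • B 1) (hηy : η (B 1) = η12 • B 0 + η22 • B 1)
    (hσ12 : σ12 ≠ 0) (hη12 : η12 ≠ 0) :
    ((∃ φ : A ≃ₗ[F] A,
        (∀ u v : A, φ (σ (b u v)) = η (b (φ u) (φ v))) ∧
        (∀ u : A, φ (σ u) = η (φ u))) ↔
      (σ11 + σ22 = η11 + η22 ∧
        σ12 * σ21 - η12 * η21 = (σ11 - η11) * (σ22 - η11))) ∧
    (∃ T : F → (A →ₗ[F] A),
      (∀ c : F, T c (B 1) ∉ Submodule.span F {B 1}) ∧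
      (∀ c c' : F,
        (∃ φ : A ≃ₗ[F] A,
          (∀ u v : A, φ (T c (b u v)) = T c' (b (φ u) (φ v))) ∧
          (∀ u : A, φ (T c u) = T c' (φ u))) → c = c')) := by
  -- b (B 1) (B 0) = - B 1
  have hba : b (B 1) (B 0) = -(B 1) := by
    have h := halt (B 0 + B 1)
    simp only [map_add, LinearMap.add_apply, halt, haff] at h
    have h2 : b (B 1) (B 0) + B 1 = 0 := by rw [← h]; abel
    exact eq_neg_of_add_eq_zero_left h2
  have hB0notin : B 0 ∉ Submodule.span F {B 1} := by
    intro h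
    rcases Submodule.mem_span_singleton.mp h with ⟨a, ha⟩
    have := congrArg (fun z => B.repr z 0) ha
    simp [Finsupp.single_apply] at this
  constructor
  · constructor
    · rintro ⟨φ, -, hcomm⟩
      obtain ⟨htr, hdet⟩ := aux_trace_det φ σ η hcomm
      rw [aux_trace B σ σ11 σ21 σ12 σ22 hσx hσy, aux_trace B η η11 η21 η12 η22 hηx hηy] at htr
      rw [aux_det B σ σ11 σ21 σ12 σ22 hσx hσy, aux_det B η η11 η21 η12 η22 hηx hηy] at hdet
      refine ⟨htr.symm, ?_⟩
      linear_combination η11 * htr.symm + hdet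
    · rintro ⟨h1, h2⟩
      set lam : F := σ12 / η12 with hlam
      set mu : F := (σ11 - η11) / η12 with hmu
      set M : Matrix (Fin 2) (Fin 2) F := !![1, 0; mu, lam] with hM
      set N : Matrix (Fin 2) (Fin 2) F := !![1, 0; -(mu/lam), lam⁻¹] with hN
      have hlamne : lam ≠ 0 := div_ne_zero hσ12 hη12
      have hMN : M * N = 1 := by
        ext i j
        fin_cases i <;> fin_cases j <;>
          simp [hM, hN, Matrix.mul_apply, Fin.sum_univ_two] <;> field_simp <;> ring
      have hNM : N * M = 1 := by
        ext i j
        fin_cases i <;> fin_cases j <;>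
          simp [hM, hN, Matrix.mul_apply, Fin.sum_univ_two] <;> field_simp <;> ring
      set φl : A →ₗ[F] A := Matrix.toLin B B M with hφl
      set ψl : A →ₗ[F] A := Matrix.toLin B B N with hψl
      have hcompMN : φl ∘ₗ ψl = LinearMap.id := by
        rw [hφl, hψl, ← Matrix.toLin_mul, hMN, Matrix.toLin_one]
      have hcompNM : ψl ∘ₗ φl = LinearMap.id := by
        rw [hφl, hψl, ← Matrix.toLin_mul, hNM, Matrix.toLin_one]
      set φ : A ≃ₗ[F] A := LinearEquiv.ofLinear φl ψl hcompMN hcompNM with hφ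
      have hφ0 : φl (B 0) = B 0 + mu • B 1 := by
        rw [hφl, Matrix.toLin_self]
        simp [hM, Fin.sum_univ_two]
      have hφ1 : φl (B 1) = lam • B 1 := by
        rw [hφl, Matrix.toLin_self]
        simp [hM, Fin.sum_univ_two]
      -- intertwining
      have hσmat : σ = Matrix.toLin B B !![σ11, σ12; σ21, σ22] := by
        rw [← aux_toMatrix B σ σ11 σ21 σ12 σ22 hσx hσy, Matrix.toLin_toMatrix]
      have hηmat : η = Matrix.toLin B B !![η11, η12; η21, η22] := by
        rw [← aux_toMatrix B η η11 η21 η12 η22 hηx hηy, Matrix.toLin_toMatrix]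
      have hmateq : M * !![σ11, σ12; σ21, σ22] = !![η11, η12; η21, η22] * M := by
        ext i j
        fin_cases i <;> fin_cases j <;>
          simp [hM, Matrix.mul_apply, Fin.sum_univ_two, hmu, hlam] <;>
          field_simp <;>
          first
          | linear_combination h2 + (σ11 - η11) * h1
          | linear_combination σ12 * h1
          | linear_combination h1
          | ring
      have hint : ∀ u : A, φl (σ u) = η (φl u) := by
        intro u
        have : φl ∘ₗ σ = η ∘ₗ φl := by
          rw [hφl, hσmat, hηmat, ← Matrix.toLin_mul, ← Matrix.toLin_mul, hmateq]
        exact congrArg (fun f => f u) this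
      -- φl is a bracket homomorphism
      have hbr : ∀ u v : A, φl (b u v) = b (φl u) (φl v) := by
        have : (b.compr₂ φl) = (b.compl₁₂ φl φl) := by
          apply LinearMap.ext_basis B B
          intro i j
          fin_cases i <;> fin_cases j <;>
            simp [LinearMap.compr₂_apply, LinearMap.compl₁₂_apply, hφ0, hφ1, halt, haff, hba,
              map_add, map_smul, map_neg]
        intro u v
        exact congrArg (fun f => f u) (congrArg (fun g => g.flip v) this) |>.trans rfl
      refine ⟨φ, ?_, hint⟩
      intro u v
      show φl (σ (b u v)) = η (b (φl u) (φl v))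
      rw [hint, hbr]
  · refine ⟨fun c => Matrix.toLin B B !![c, 1; 0, 0], ?_, ?_⟩
    · intro c
      have : Matrix.toLin B B !![c, 1; 0, 0] (B 1) = B 0 := by
        rw [Matrix.toLin_self]; simp [Fin.sum_univ_two]
      rw [this]; exact hB0notin
    · rintro c c' ⟨φ, -, hcomm⟩
      obtain ⟨htr, -⟩ := aux_trace_det φ _ _ hcomm
      have e1 : Matrix.toLin B B !![c, 1; 0, 0] (B 0) = c • B 0 + (0:F) • B 1 := by
        rw [Matrix.toLin_self]; simp [Fin.sum_univ_two]
      have e2 : Matrix.toLin B B !![c, 1; 0, 0] (B 1) = (1:F) • B 0 + (0:F) • B 1 := by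
        rw [Matrix.toLin_self]; simp [Fin.sum_univ_two]
      have e1' : Matrix.toLin B B !![c', 1; 0, 0] (B 0) = c' • B 0 + (0:F) • B 1 := by
        rw [Matrix.toLin_self]; simp [Fin.sum_univ_two]
      have e2' : Matrix.toLin B B !![c', 1; 0, 0] (B 1) = (1:F) • B 0 + (0:F) • B 1 := by
        rw [Matrix.toLin_self]; simp [Fin.sum_univ_two]
      rw [aux_trace B _ c 0 1 0 e1 e2, aux_trace B _ c' 0 1 0 e1' e2'] at htr
      simpa using htr.symm
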